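/- arXiv:1310.1648 — 6 statements merged into one kernel-verified Lean document; each statement's English description precedes it below -/
import Mathlib

section
/- Consider the closed distributed SIR system: μ a finite measure on W, β : W → ℝ measurable nonnegative, S₀ : W → ℝ nonnegative integrable with S(0) = ∫S₀dμ > 0, constants N > 0 and γ > 0, continuous nonnegative I : [0,∞) → ℝ, q with q(0)=0 and q'(t) = -I(t)/N, S(t,w) = S₀(w)e^{β(w)q(t)}, S(t) = ∫S(t,w)dμ, R'(t) = γI(t) with R(0) = 0, and S(t) + I(t) + R(t) = N for all t. Assume I(t) → 0 and S(t) → S_∞ as t → ∞, that ∫₀^∞ I(u)du < ∞, and that M_β(λ) = ∫(S₀(w)/S(0))e^{β(w)λ}dμ(w) is finite and continuous on (-∞,0]. Then the final epidemic size satisfies S_∞ = S(0)·M_β((S_∞ − N)/(Nγ)). -/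
open MeasureTheory Filter

/-- Final epidemic size relation for the closed distributed SIR model:
`S_∞ = S(0)·M_β((S_∞ − N)/(Nγ))`. -/
theorem closed_sir_final_size
    {W : Type*} [MeasurableSpace W]
    (μ : Measure W) [IsFiniteMeasure μ]
    (β : W → ℝ) (hβ : Measurable β) (hβpos : ∀ w, 0 ≤ β w)
    (S₀ : W → ℝ) (hS₀pos : ∀ w, 0 ≤ S₀ w) (hS₀int : Integrable S₀ μ)
    (hS0 : 0 < ∫ w, S₀ w ∂μ)
    (N γ : ℝ) (hN : 0 < N) (hγ : 0 < γ)
    (I : ℝ → ℝ) (hIcont : ContinuousOn I (Set.Ici 0))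
    (hIpos : ∀ t ≥ (0:ℝ), 0 ≤ I t)
    (q : ℝ → ℝ) (hq0 : q 0 = 0)
    (hq : ∀ t ≥ (0:ℝ), HasDerivAt q (-I t / N) t)
    (S : ℝ → ℝ) (hS : ∀ t, S t = ∫ w, S₀ w * Real.exp (β w * q t) ∂μ)
    (R : ℝ → ℝ) (hR0 : R 0 = 0)
    (hR : ∀ t ≥ (0:ℝ), HasDerivAt R (γ * I t) t)
    (hcons : ∀ t ≥ (0:ℝ), S t + I t + R t = N)
    (Sinf : ℝ)
    (hIlim : Tendsto I atTop (nhds 0))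
    (hSlim : Tendsto S atTop (nhds Sinf))
    (hIint : IntegrableOn I (Set.Ici 0))
    (M : ℝ → ℝ)
    (hM : ∀ lam : ℝ, M lam = ∫ w, (S₀ w / (∫ w', S₀ w' ∂μ)) * Real.exp (β w * lam) ∂μ)
    (hMfin : ∀ lam ≤ (0:ℝ), Integrable (fun w => S₀ w * Real.exp (β w * lam)) μ)
    (hMcont : ContinuousOn M (Set.Iic 0)) :
    Sinf = (∫ w, S₀ w ∂μ) * M ((Sinf - N) / (N * γ)) := by
  set c : ℝ := ∫ w, S₀ w ∂μ with hc
  have hcne : c ≠ 0 := ne_of_gt hS0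
  set A : ℝ := ∫ u in Set.Ici (0:ℝ), I u with hA
  -- integral formulas for q and R
  have hint : ∀ t ≥ (0:ℝ), IntervalIntegrable I volume 0 t := by
    intro t ht
    apply ContinuousOn.intervalIntegrable
    apply hIcont.mono
    rw [Set.uIcc_of_le ht]
    exact fun x hx => hx.1
  have hqeq : ∀ t ≥ (0:ℝ), q t = -(∫ u in (0:ℝ)..t, I u) / N := by
    intro t ht
    have h1 : ∫ u in (0:ℝ)..t, -I u / N = q t - q 0 := by
      apply intervalIntegral.integral_eq_sub_of_hasDerivAt
      · intro u hu
        rw [Set.uIcc_of_le ht] at hu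
        exact hq u hu.1
      · have := (hint t ht).neg.div_const N
        simpa [neg_div] using this
    have h2 : ∫ u in (0:ℝ)..t, -I u / N = -(∫ u in (0:ℝ)..t, I u) / N := by
      simp [intervalIntegral.integral_div, intervalIntegral.integral_neg]
    rw [h2, hq0, sub_zero] at h1
    exact h1.symm
  have hReq : ∀ t ≥ (0:ℝ), R t = γ * ∫ u in (0:ℝ)..t, I u := by
    intro t ht
    have h1 : ∫ u in (0:ℝ)..t, γ * I u = R t - R 0 := by
      apply intervalIntegral.integral_eq_sub_of_hasDerivAt
      · intro u hu
        rw [Set.uIcc_of_le ht] at hu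
        exact hR u hu.1
      · exact (hint t ht).const_mul γ
    rw [hR0, sub_zero, intervalIntegral.integral_const_mul] at h1
    exact h1.symm
  have hTA : Tendsto (fun t => ∫ u in (0:ℝ)..t, I u) atTop (nhds A) := by
    rw [hA, MeasureTheory.integral_Ici_eq_integral_Ioi]
    exact MeasureTheory.intervalIntegral_tendsto_integral_Ioi 0
      (hIint.mono_set Set.Ioi_subset_Ici_self) tendsto_id
  -- limit of R
  have hRlim : Tendsto R atTop (nhds (γ * A)) := by
    apply Tendsto.congr' _ (hTA.const_mul γ)
    filter_upwards [eventually_ge_atTop (0:ℝ)] with t ht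
    exact (hReq t ht).symm
  have hRlim' : Tendsto R atTop (nhds (N - Sinf - 0)) := by
    apply Tendsto.congr' _ (((tendsto_const_nhds.sub hSlim).sub hIlim))
    filter_upwards [eventually_ge_atTop (0:ℝ)] with t ht
    have := hcons t ht; ring_nf; linarith
  have hAval : γ * A = N - Sinf := by
    have := tendsto_nhds_unique hRlim hRlim'
    linarith
  -- qinf
  have hqinf_eq : -A / N = (Sinf - N) / (N * γ) := by
    have hAe : A = (N - Sinf) / γ := by field_simp at hAval ⊢; linarith
    rw [hAe, mul_comm N γ, ← div_div, ← neg_div, neg_sub]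
  have hqlim : Tendsto q atTop (nhds ((Sinf - N) / (N * γ))) := by
    rw [← hqinf_eq]
    apply Tendsto.congr' _ (hTA.neg.div_const N)
    filter_upwards [eventually_ge_atTop (0:ℝ)] with t ht
    exact (hqeq t ht).symm
  -- q t ≤ 0 for t ≥ 0
  have hqle : ∀ t ≥ (0:ℝ), q t ≤ 0 := by
    intro t ht
    rw [hqeq t ht]
    apply div_nonpos_of_nonpos_of_nonneg _ hN.le
    rw [neg_nonpos]
    apply intervalIntegral.integral_nonneg ht
    intro u hu
    exact hIpos u hu.1
  -- S t = c * M (q t)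
  have hcM : ∀ lam : ℝ, c * M lam = ∫ w, S₀ w * Real.exp (β w * lam) ∂μ := by
    intro lam
    rw [hM lam]
    have : ∀ w, (S₀ w / c) * Real.exp (β w * lam)
        = (S₀ w * Real.exp (β w * lam)) / c := fun w => by ring
    simp_rw [this, integral_div]
    field_simp
    simp only [mul_comm lam]
  have hSM : ∀ t, S t = c * M (q t) := fun t => by rw [hS t, hcM]
  -- qinf ≤ 0
  have hqinfle : (Sinf - N) / (N * γ) ≤ 0 := by
    rw [← hqinf_eq]
    apply div_nonpos_of_nonpos_of_nonneg _ hN.le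
    rw [neg_nonpos, hA]
    exact setIntegral_nonneg measurableSet_Ici (fun u hu => hIpos u hu)
  -- limit of S via M
  have hMw : ContinuousWithinAt M (Set.Iic 0) ((Sinf - N) / (N * γ)) :=
    hMcont _ hqinfle
  have hqW : Tendsto q atTop (nhdsWithin ((Sinf - N) / (N * γ)) (Set.Iic 0)) := by
    apply tendsto_nhdsWithin_of_tendsto_nhds_of_eventually_within _ hqlim
    filter_upwards [eventually_ge_atTop (0:ℝ)] with t ht
    exact hqle t ht
  have hSlim2 : Tendsto S atTop (nhds (c * M ((Sinf - N) / (N * γ)))) := by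
    have : Tendsto (fun t => M (q t)) atTop (nhds (M ((Sinf - N) / (N * γ)))) :=
      hMw.tendsto.comp hqW
    have hfe : S = fun t => c * M (q t) := funext hSM
    rw [hfe]
    exact this.const_mul c
  exact tendsto_nhds_unique hSlim hSlim2
end

section
/- Let Λ, m ∈ ℝ, β : W → ℝ, N₀ : W → ℝ, let N : ℝ → ℝ be positive, I : ℝ → ℝ continuous, and q : ℝ → ℝ differentiable with q(0) = 0 and q'(t) = −I(t)/N(t). If for each w ∈ W the function t ↦ S(t,w) is differentiable and satisfies S'(t,w) = Λ·N₀(w)·e^{(Λ−m)t} − β(w)·S(t,w)·I(t)/N(t) − m·S(t,w), then for all t and w: S(t,w) = (Λ·N₀(w)·∫₀ᵗ e^{Λr − β(w)q(r)} dr + S(0,w))·e^{β(w)q(t) − mt}. -/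
/-- Integrating-factor solution of the susceptible equation in the open
('blue-sky' births) distributed SIR model:
`S(t,w) = (ΛN₀(w)∫₀ᵗ e^{Λr − β(w)q(r)}dr + S(0,w))·e^{β(w)q(t) − mt}`. -/
theorem open_sir_susceptible_solution
    {W : Type*}
    (Λ m : ℝ) (β N₀ : W → ℝ)
    (N : ℝ → ℝ) (hNpos : ∀ t, 0 < N t)
    (I : ℝ → ℝ) (hI : Continuous I)
    (q : ℝ → ℝ) (hq0 : q 0 = 0)
    (hq : ∀ t : ℝ, HasDerivAt q (-I t / N t) t)
    (S : ℝ → W → ℝ)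
    (hS : ∀ w : W, ∀ t : ℝ,
      HasDerivAt (fun τ => S τ w)
        (Λ * N₀ w * Real.exp ((Λ - m) * t)
          - β w * S t w * I t / N t - m * S t w) t) :
    ∀ (t : ℝ) (w : W),
      S t w =
        (Λ * N₀ w * (∫ r in (0:ℝ)..t, Real.exp (Λ * r - β w * q r)) + S 0 w) *
          Real.exp (β w * q t - m * t) := by
  intro t w
  set b := β w with hb
  have hqc : Continuous q := Differentiable.continuous (fun τ => (hq τ).differentiableAt)
  set f : ℝ → ℝ := fun τ => S τ w * Real.exp (m * τ - b * q τ) with hf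
  have hfd : ∀ τ, HasDerivAt f (Λ * N₀ w * Real.exp (Λ * τ - b * q τ)) τ := by
    intro τ
    have h1 : HasDerivAt (fun τ => m * τ - b * q τ) (m - b * (-I τ / N τ)) τ :=
      by exact (((hasDerivAt_id' τ).const_mul m).sub ((hq τ).const_mul b)).congr_deriv (by ring)
    have h3 := (hS w τ).mul h1.exp
    refine h3.congr_deriv ?_; symm
    have hN := (hNpos τ).ne'
    have he : Real.exp (Λ * τ - b * q τ)
        = Real.exp ((Λ - m) * τ) * Real.exp (m * τ - b * q τ) := by
      rw [← Real.exp_add]; ring_nf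
    rw [he]
    field_simp
    ring
  have hcont : Continuous (fun r => Λ * N₀ w * Real.exp (Λ * r - b * q r)) := by
    exact continuous_const.mul (((continuous_const.mul continuous_id).sub
      (continuous_const.mul hqc)).rexp)
  have hint : f t - f 0 = ∫ r in (0:ℝ)..t, Λ * N₀ w * Real.exp (Λ * r - b * q r) := by
    rw [intervalIntegral.integral_eq_sub_of_hasDerivAt (fun τ _ => hfd τ)
      (hcont.intervalIntegrable 0 t)]
  rw [intervalIntegral.integral_const_mul] at hint
  have hf0 : f 0 = S 0 w := by simp [hf, hq0]
  have hft : f t = S t w * Real.exp (m * t - b * q t) := rfl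
  have key : S t w * Real.exp (m * t - b * q t)
      = Λ * N₀ w * (∫ r in (0:ℝ)..t, Real.exp (Λ * r - b * q r)) + S 0 w := by
    rw [← hft, ← hf0]; linarith [hint]
  have hexp : Real.exp (m * t - b * q t) * Real.exp (b * q t - m * t) = 1 := by
    rw [← Real.exp_add]; ring_nf; exact Real.exp_zero
  calc S t w = S t w * (Real.exp (m * t - b * q t) * Real.exp (b * q t - m * t)) := by
        rw [hexp, mul_one]
    _ = (S t w * Real.exp (m * t - b * q t)) * Real.exp (b * q t - m * t) := by ring
    _ = _ := by rw [key]
end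

section
/- Consider the open distributed SIR model: μ a finite measure on W, β : W → ℝ bounded measurable, N₀ : W → ℝ nonnegative μ-integrable with ∫N₀dμ > 0, constants Λ > 0, m > 0, c ∈ (0,1], I : ℝ → ℝ continuous nonnegative with I(0) > 0, N(t) = (∫N₀dμ)e^{(Λ−m)t}, and S(t,w) differentiable in t satisfying S'(t,w) = Λ·N₀(w)e^{(Λ−m)t} − β(w)S(t,w)I(t)/N(t) − m·S(t,w) with proportional initial data S(0,w) = c·N₀(w). Assume t ↦ ∫S(t,·)dμ and t ↦ ∫βS(t,·)dμ are differentiable at 0 with derivatives ∫S'(0,·)dμ and ∫βS'(0,·)dμ respectively. Then β̄(t) = ∫β(w)S(t,w)dμ / ∫S(t,w)dμ is differentiable at t = 0 and β̄'(0) = −(I(0)/N(0))·(∫β²S(0,·)dμ/∫S(0,·)dμ − β̄(0)²) ≤ 0; i.e., the mean susceptibility is initially nonincreasing. -/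
open MeasureTheory

/-- In the open distributed SIR model with all births susceptible and
proportional initial data, the mean susceptibility
`β̄(t) = ∫βS(t,·)dμ / ∫S(t,·)dμ` satisfies
`β̄'(0) = −(I(0)/N(0))·Var(β | S(0,·)) ≤ 0`. -/
theorem open_sir_mean_susceptibility_initially_decreasing
    {W : Type*} [MeasurableSpace W]
    (μ : Measure W) [IsFiniteMeasure μ]
    (β : W → ℝ) (hβmeas : Measurable β) (C : ℝ) (hβbdd : ∀ w, |β w| ≤ C)
    (N₀ : W → ℝ) (hN₀pos : ∀ w, 0 ≤ N₀ w) (hN₀int : Integrable N₀ μ)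
    (hN₀tot : 0 < ∫ w, N₀ w ∂μ)
    (Λ m : ℝ) (hΛ : 0 < Λ) (hm : 0 < m)
    (c : ℝ) (hc : c ∈ Set.Ioc (0:ℝ) 1)
    (I : ℝ → ℝ) (hIcont : Continuous I) (hIpos : ∀ t, 0 ≤ I t) (hI0 : 0 < I 0)
    (N : ℝ → ℝ) (hN : ∀ t, N t = (∫ w, N₀ w ∂μ) * Real.exp ((Λ - m) * t))
    (S : ℝ → W → ℝ)
    (hSderiv : ∀ w : W, ∀ t : ℝ,
      HasDerivAt (fun τ => S τ w)
        (Λ * N₀ w * Real.exp ((Λ - m) * t)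
          - β w * S t w * I t / N t - m * S t w) t)
    (hS0 : ∀ w, S 0 w = c * N₀ w)
    (hSint : ∀ t, Integrable (fun w => S t w) μ)
    (hβSint : ∀ t, Integrable (fun w => β w * S t w) μ)
    (hβ2Sint : Integrable (fun w => (β w) ^ 2 * S 0 w) μ)
    (hD1 : HasDerivAt (fun t => ∫ w, S t w ∂μ)
      (∫ w, (Λ * N₀ w - β w * S 0 w * I 0 / N 0 - m * S 0 w) ∂μ) 0)
    (hD2 : HasDerivAt (fun t => ∫ w, β w * S t w ∂μ)
      (∫ w, β w * (Λ * N₀ w - β w * S 0 w * I 0 / N 0 - m * S 0 w) ∂μ) 0) :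
    HasDerivAt (fun t => (∫ w, β w * S t w ∂μ) / (∫ w, S t w ∂μ))
        (-(I 0 / N 0) *
          ((∫ w, (β w) ^ 2 * S 0 w ∂μ) / (∫ w, S 0 w ∂μ) -
            ((∫ w, β w * S 0 w ∂μ) / (∫ w, S 0 w ∂μ)) ^ 2)) 0 ∧
      -(I 0 / N 0) *
          ((∫ w, (β w) ^ 2 * S 0 w ∂μ) / (∫ w, S 0 w ∂μ) -
            ((∫ w, β w * S 0 w ∂μ) / (∫ w, S 0 w ∂μ)) ^ 2) ≤ 0 := by
  obtain ⟨hc0, hc1⟩ := hc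
  set T : ℝ := ∫ w, N₀ w ∂μ with hT
  set A : ℝ := ∫ w, S 0 w ∂μ with hAdef
  set B : ℝ := ∫ w, β w * S 0 w ∂μ with hBdef
  set Q : ℝ := ∫ w, (β w) ^ 2 * S 0 w ∂μ with hQdef
  have hN0val : N 0 = T := by simp [hN 0]
  have hk : 0 < I 0 / N 0 := by
    rw [hN0val]; exact div_pos hI0 hN₀tot
  set k : ℝ := I 0 / N 0 with hkdef
  have hAval : A = c * T := by
    rw [hAdef, hT, ← integral_const_mul]
    exact integral_congr_ae (Filter.Eventually.of_forall fun w => hS0 w)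
  have hApos : 0 < A := by rw [hAval]; positivity
  have hAne : A ≠ 0 := ne_of_gt hApos
  -- integrability facts
  have hβS0 := hβSint 0
  have hS0int := hSint 0
  have hβN₀eq : (fun w => β w * N₀ w) = fun w => (β w * S 0 w) / c := by
    funext w; rw [hS0 w]; field_simp
  have hβN₀int : Integrable (fun w => β w * N₀ w) μ := by
    rw [hβN₀eq]; exact hβS0.div_const c
  have hβN₀val : (∫ w, β w * N₀ w ∂μ) = B / c := by
    rw [hβN₀eq, integral_div]
  -- compute D1
  have hi1 : Integrable (fun w => Λ * N₀ w) μ := hN₀int.const_mul Λ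
  have hi2 : Integrable (fun w => (β w * S 0 w) * k) μ := hβS0.mul_const k
  have hi3 : Integrable (fun w => m * S 0 w) μ := hS0int.const_mul m
  have hi12 : Integrable (fun w => Λ * N₀ w - (β w * S 0 w) * k) μ := hi1.sub hi2
  have hD1val : (∫ w, (Λ * N₀ w - β w * S 0 w * I 0 / N 0 - m * S 0 w) ∂μ)
      = Λ * T - k * B - m * A := by
    have heq : (fun w => Λ * N₀ w - β w * S 0 w * I 0 / N 0 - m * S 0 w)
        = fun w => (Λ * N₀ w - (β w * S 0 w) * k) - m * S 0 w := by
      funext w; rw [hkdef]; ring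
    rw [heq, integral_sub hi12 hi3, integral_sub hi1 hi2, integral_const_mul,
      integral_mul_const, integral_const_mul]
    rw [hT, hAdef, hBdef]; ring
  -- compute D2
  have hj1 : Integrable (fun w => Λ * (β w * N₀ w)) μ := hβN₀int.const_mul Λ
  have hj2 : Integrable (fun w => ((β w) ^ 2 * S 0 w) * k) μ := hβ2Sint.mul_const k
  have hj3 : Integrable (fun w => m * (β w * S 0 w)) μ := hβS0.const_mul m
  have hj12 : Integrable (fun w => Λ * (β w * N₀ w) - ((β w) ^ 2 * S 0 w) * k) μ :=
    hj1.sub hj2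
  have hD2val : (∫ w, β w * (Λ * N₀ w - β w * S 0 w * I 0 / N 0 - m * S 0 w) ∂μ)
      = Λ * (B / c) - k * Q - m * B := by
    have heq : (fun w => β w * (Λ * N₀ w - β w * S 0 w * I 0 / N 0 - m * S 0 w))
        = fun w => (Λ * (β w * N₀ w) - ((β w) ^ 2 * S 0 w) * k) - m * (β w * S 0 w) := by
      funext w; rw [hkdef]; ring
    rw [heq, integral_sub hj12 hj3, integral_sub hj1 hj2, integral_const_mul,
      integral_mul_const, integral_const_mul, hβN₀val]
    rw [hQdef, hBdef]; ring
  -- variance nonnegativity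
  have hg1 : Integrable (fun w => (2 * (B / A)) * (β w * S 0 w)) μ := hβS0.const_mul _
  have hg2 : Integrable (fun w => (B / A) ^ 2 * S 0 w) μ := hS0int.const_mul _
  have hg12 : Integrable (fun w => (β w) ^ 2 * S 0 w
      - (2 * (B / A)) * (β w * S 0 w)) μ := hβ2Sint.sub hg1
  have hvar : 0 ≤ Q / A - (B / A) ^ 2 := by
    have hnn : 0 ≤ ∫ w, (((β w) ^ 2 * S 0 w
        - (2 * (B / A)) * (β w * S 0 w)) + (B / A) ^ 2 * S 0 w) ∂μ := by
      apply integral_nonneg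
      intro w
      simp only [Pi.zero_apply]
      have hS0nn : 0 ≤ S 0 w := by rw [hS0 w]; exact mul_nonneg hc0.le (hN₀pos w)
      nlinarith [mul_nonneg hS0nn (sq_nonneg (β w - B / A))]
    rw [integral_add hg12 hg2, integral_sub hβ2Sint hg1, integral_const_mul,
      integral_const_mul] at hnn
    rw [← hQdef, ← hBdef, ← hAdef] at hnn
    have h2 : 0 ≤ Q - B ^ 2 / A := by
      have hq : Q - 2 * (B / A) * B + (B / A) ^ 2 * A = Q - B ^ 2 / A := by
        field_simp; ring
      linarith [hq ▸ hnn]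
    have h3 := div_nonneg h2 hApos.le
    have hexp : (Q - B ^ 2 / A) / A = Q / A - (B / A) ^ 2 := by
      field_simp
    linarith [hexp ▸ h3]
  constructor
  · have hder := hD2.div hD1 hAne
    rw [hD1val, hD2val, ← hAdef, ← hBdef] at hder
    refine HasDerivAt.congr_deriv hder ?_
    have hTA : T = A / c := by rw [hAval]; field_simp
    rw [hkdef, hN0val, hTA]
    field_simp
    ring
  · nlinarith [mul_nonneg hk.le hvar]
end

section
/- Let λ ∈ ℝ, K > 0, β : W → ℝ, let N : ℝ → ℝ be positive, I : ℝ → ℝ continuous, and let u, v : ℝ → ℝ be differentiable with u(0) = v(0) = 0, u'(t) = −λN(t)/K, and v'(t) = −I(t)/N(t). If for each w ∈ W the function t ↦ S(t,w) is differentiable and satisfies S'(t,w) = λ·S(t,w)·(1 − N(t)/K) − β(w)·S(t,w)·I(t)/N(t), then S(t,w) = S(0,w)·e^{λt + u(t) + β(w)v(t)} for all t and w. -/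
/-- Solution of the susceptible equation in the sterilization model with two
transport variables: `S(t,w) = S(0,w)·e^{λt + u(t) + β(w)v(t)}`. -/
theorem sterilization_susceptible_solution
    {W : Type*}
    (lam K : ℝ) (hK : 0 < K) (β : W → ℝ)
    (N : ℝ → ℝ) (hNpos : ∀ t, 0 < N t)
    (I : ℝ → ℝ) (hI : Continuous I)
    (u v : ℝ → ℝ) (hu0 : u 0 = 0) (hv0 : v 0 = 0)
    (hu : ∀ t : ℝ, HasDerivAt u (-(lam * N t / K)) t)
    (hv : ∀ t : ℝ, HasDerivAt v (-I t / N t) t)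
    (S : ℝ → W → ℝ)
    (hS : ∀ w : W, ∀ t : ℝ,
      HasDerivAt (fun τ => S τ w)
        (lam * S t w * (1 - N t / K) - β w * S t w * I t / N t) t) :
    ∀ (t : ℝ) (w : W),
      S t w = S 0 w * Real.exp (lam * t + u t + β w * v t) := by
  intro t w
  set E : ℝ → ℝ := fun τ => lam * τ + u τ + β w * v τ with hE
  have hE' : ∀ τ, HasDerivAt E
      (lam + (-(lam * N τ / K)) + β w * (-I τ / N τ)) τ := by
    intro τ
    have h1 : HasDerivAt (fun τ : ℝ => lam * τ) lam τ := by
      simpa using (hasDerivAt_id τ).const_mul lam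
    exact (h1.add (hu τ)).add ((hv τ).const_mul (β w))
  set g : ℝ → ℝ := fun τ => S τ w * Real.exp (-(E τ)) with hg
  have hg' : ∀ τ, HasDerivAt g 0 τ := by
    intro τ
    have hexp : HasDerivAt (fun τ => Real.exp (-(E τ)))
        (Real.exp (-(E τ)) * (-(lam + (-(lam * N τ / K)) + β w * (-I τ / N τ)))) τ :=
      ((hE' τ).neg).exp
    have h : HasDerivAt g _ τ := (hS w τ).mul hexp
    convert h using 1
    have hN : N τ ≠ 0 := (hNpos τ).ne'
    have hKne : K ≠ 0 := hK.ne'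
    ring
  have hconst : g t = g 0 := by
    have hdiff : Differentiable ℝ g := fun x => (hg' x).differentiableAt
    have hderiv : ∀ x, deriv g x = 0 := fun x => (hg' x).deriv
    exact is_const_of_deriv_eq_zero hdiff hderiv t 0
  have hE0 : E 0 = 0 := by simp [hE, hu0, hv0]
  have hg0 : g 0 = S 0 w := by simp [hg, hE0]
  have hgt : S t w * Real.exp (-(E t)) = S 0 w := by
    rw [← hg0]; exact hconst
  have hexpne : Real.exp (-(E t)) ≠ 0 := Real.exp_ne_zero _
  have : S t w = S 0 w * Real.exp (E t) := by
    rw [← hgt, mul_assoc, ← Real.exp_add, neg_add_cancel, Real.exp_zero, mul_one]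
  simpa [hE] using this
end

section
/- Let λ > 0, γ > 0, and β ∈ ℝ with β > λ + γ. Define n* = γ/(β−λ), s* = γ²/(β−λ)², i* = λγ(β−λ−γ)/(β(β−λ)²), and r* = γ(β−λ−γ)/(β(β−λ)). Then n* ∈ (0,1), s* > 0, i* > 0, r* > 0, and (s*, i*, r*, n*) is an equilibrium of the rescaled undistributed sterilization system; that is: λ·s*·(1−n*) − β·s*·i*/n* = 0, β·s*·i*/n* − (γ + λn*)·i* = 0, γ·i* − λ·r*·n* = 0, and λ·s* − λ·(n*)² = 0. Moreover i* > 0 holds if and only if β > λ + γ, so this endemic equilibrium is biologically valid exactly when β − λ − γ > 0. -/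
/-- The endemic equilibrium of the rescaled undistributed sterilization model:
for `β > λ + γ` the point
`(s*, i*, r*, n*) = (γ²/(β−λ)², λγ(β−λ−γ)/(β(β−λ)²), γ(β−λ−γ)/(β(β−λ)), γ/(β−λ))`
is biologically valid and is an equilibrium; moreover `i* > 0 ↔ β > λ + γ`. -/
theorem sterilization_endemic_equilibrium
    (lam γ β : ℝ) (hlam : 0 < lam) (hγ : 0 < γ) (hβ : lam + γ < β) :
    let n : ℝ := γ / (β - lam)
    let s : ℝ := γ ^ 2 / (β - lam) ^ 2
    let i : ℝ := lam * γ * (β - lam - γ) / (β * (β - lam) ^ 2)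
    let r : ℝ := γ * (β - lam - γ) / (β * (β - lam))
    (0 < n ∧ n < 1) ∧ 0 < s ∧ 0 < i ∧ 0 < r ∧
      lam * s * (1 - n) - β * s * i / n = 0 ∧
      β * s * i / n - (γ + lam * n) * i = 0 ∧
      γ * i - lam * r * n = 0 ∧
      lam * s - lam * n ^ 2 = 0 ∧
      (0 < i ↔ lam + γ < β) := by
  intro n s i r
  have hbl : 0 < β - lam := by linarith
  have hblγ : 0 < β - lam - γ := by linarith
  have hβ0 : 0 < β := by linarith
  have hbl2 : 0 < (β - lam) ^ 2 := by positivity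
  have hn : 0 < n := div_pos hγ hbl
  have hn1 : n < 1 := (div_lt_one hbl).mpr (by linarith)
  have hs : 0 < s := by positivity
  have hi : 0 < i := by positivity
  have hr : 0 < r := by positivity
  have hbl' : β - lam ≠ 0 := ne_of_gt hbl
  have hβ' : β ≠ 0 := ne_of_gt hβ0
  have hγ' : γ ≠ 0 := ne_of_gt hγ
  refine ⟨⟨hn, hn1⟩, hs, hi, hr, ?_, ?_, ?_, ?_, ⟨fun _ => hβ, fun _ => hi⟩⟩ <;>
    simp only [n, s, i, r] <;> field_simp <;> ring
end

section
/- Let λ > 0 and γ > 0 be constants and b : [0,∞) → ℝ a continuous nonnegative function. Suppose s, i, r : [0,∞) → ℝ are differentiable, n(t) = s(t)+i(t)+r(t) > 0 for all t ≥ 0, and they satisfy s' = λs(1−n) − b·si/n, i' = b·si/n − (γ+λn)i, and r' = γi − λrn. If s(0) ≥ 0, i(0) ≥ 0, r(0) ≥ 0, and s(0)+i(0)+r(0) ≤ 1, then for all t ≥ 0: s(t) ≥ 0, i(t) ≥ 0, r(t) ≥ 0, and s(t)+i(t)+r(t) ≤ 1; in particular s(t)+i(t) ≤ 1 and n(t)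 ≤ 1, so the biologically valid region is positively invariant for the (nonautonomous) sterilization transport system. -/
set_option maxHeartbeats 1000000

open Filter Set Topology

lemma posPart_slope {u : ℝ → ℝ} {u' x : ℝ} (hu : HasDerivAt u u' x) :
    ∃ L, L ≤ (if u x < 0 then 0 else max u' 0) ∧
      Tendsto (fun z => (z - x)⁻¹ * (max (u z) 0 - max (u x) 0)) (𝓝[>] x) (𝓝 L) := by
  have hcont : ContinuousAt u x := hu.continuousAt
  have hslope : Tendsto (fun z => (z - x)⁻¹ * (u z - u x)) (𝓝[>] x) (𝓝 u') := by
    have h1 := hasDerivAt_iff_tendsto_slope.mp hu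
    have h2 : (𝓝[>] x) ≤ (𝓝[≠] x) :=
      nhdsWithin_mono x (fun z hz => ne_of_gt hz)
    exact (h1.mono_left h2).congr (fun z => by rw [slope_def_field]; ring)
  rcases lt_trichotomy (u x) 0 with h | h | h
  · refine ⟨0, by simp [h], ?_⟩
    have hev : ∀ᶠ z in 𝓝[>] x, u z < 0 :=
      mem_nhdsWithin_of_mem_nhds (hcont.preimage_mem_nhds (Iio_mem_nhds h))
    refine Tendsto.congr' ?_ tendsto_const_nhds
    filter_upwards [hev] with z hz
    rw [max_eq_right hz.le, max_eq_right h.le]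
    ring
  · refine ⟨max u' 0, by simp [h], ?_⟩
    have h2 : Tendsto (fun z => max ((z - x)⁻¹ * (u z - u x)) 0) (𝓝[>] x) (𝓝 (max u' 0)) :=
      hslope.max tendsto_const_nhds
    refine Tendsto.congr' ?_ h2
    filter_upwards [self_mem_nhdsWithin] with z hz
    have hzx : (0:ℝ) ≤ (z - x)⁻¹ := le_of_lt (inv_pos.2 (by simpa using sub_pos.2 (mem_Ioi.mp hz)))
    rw [h, sub_zero, max_eq_left le_rfl, sub_zero]
    rw [mul_max_of_nonneg _ _ hzx, mul_zero]
  · refine ⟨u', by simp [not_lt.2 h.le, le_max_left], ?_⟩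
    have hev : ∀ᶠ z in 𝓝[>] x, 0 < u z :=
      mem_nhdsWithin_of_mem_nhds (hcont.preimage_mem_nhds (Ioi_mem_nhds h))
    refine Tendsto.congr' ?_ hslope
    filter_upwards [hev] with z hz
    rw [max_eq_left hz.le, max_eq_left h.le]

/-- Positive invariance of the biologically valid region for the rescaled
(nonautonomous) sterilization transport system: if the proportions start with
`s, i, r ≥ 0` and `s + i + r ≤ 1`, they satisfy these bounds for all `t ≥ 0`;
in particular `s + i ≤ 1` and `n = s + i + r ≤ 1`. -/
theorem sterilization_region_invariant
    (lam γ : ℝ) (hlam : 0 < lam) (hγ : 0 < γ)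
    (b : ℝ → ℝ) (hbcont : Continuous b) (hbpos : ∀ t ≥ (0:ℝ), 0 ≤ b t)
    (s i r : ℝ → ℝ)
    (hn : ∀ t ≥ (0:ℝ), 0 < s t + i t + r t)
    (hs : ∀ t ≥ (0:ℝ), HasDerivAt s
      (lam * s t * (1 - (s t + i t + r t))
        - b t * s t * i t / (s t + i t + r t)) t)
    (hi : ∀ t ≥ (0:ℝ), HasDerivAt i
      (b t * s t * i t / (s t + i t + r t)
        - (γ + lam * (s t + i t + r t)) * i t) t)
    (hr : ∀ t ≥ (0:ℝ), HasDerivAt r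
      (γ * i t - lam * r t * (s t + i t + r t)) t)
    (hs0 : 0 ≤ s 0) (hi0 : 0 ≤ i 0) (hr0 : 0 ≤ r 0)
    (hsum0 : s 0 + i 0 + r 0 ≤ 1) :
    ∀ t ≥ (0:ℝ),
      0 ≤ s t ∧ 0 ≤ i t ∧ 0 ≤ r t ∧ s t + i t + r t ≤ 1 ∧
        s t + i t ≤ 1 ∧ s t + i t + r t ≤ 1 := by
  -- notation for the derivative expressions
  set S' : ℝ → ℝ := fun x => lam * s x * (1 - (s x + i x + r x))
      - b x * s x * i x / (s x + i x + r x) with hS'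
  set I' : ℝ → ℝ := fun x => b x * s x * i x / (s x + i x + r x)
      - (γ + lam * (s x + i x + r x)) * i x with hI'
  set R' : ℝ → ℝ := fun x => γ * i x - lam * r x * (s x + i x + r x) with hR'
  set g : ℝ → ℝ := fun τ => max (-(s τ)) 0 + max (-(i τ)) 0 + max (-(r τ)) 0
      + max (s τ + i τ + r τ - 1) 0 with hg
  set c : ℝ → ℝ := fun x => b x * i x / (s x + i x + r x) - lam * (1 - (s x + i x + r x))
    with hc
  set d : ℝ → ℝ := fun x => b x * s x / (s x + i x + r x) - (γ + lam * (s x + i x + r x))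
    with hd
  set φ : ℝ → ℝ := fun x =>
      (if -(s x) < 0 then 0 else max (-(S' x)) 0) +
      (if -(i x) < 0 then 0 else max (-(I' x)) 0) +
      (if -(r x) < 0 then 0 else max (-(R' x)) 0) +
      (if s x + i x + r x - 1 < 0 then 0 else max (S' x + I' x + R' x) 0) with hφ
  have hgnn : ∀ τ, 0 ≤ g τ := by
    intro τ
    have := le_max_right (-(s τ)) 0
    have := le_max_right (-(i τ)) 0
    have := le_max_right (-(r τ)) 0
    have := le_max_right (s τ + i τ + r τ - 1) 0
    simp only [hg]; linarith
  have hgle : ∀ t ≥ (0:ℝ), g t ≤ 0 := by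
    intro t ht
    -- continuity on [0, t]
    have hcs : ContinuousOn s (Icc 0 t) := fun x hx => ((hs x hx.1).continuousAt).continuousWithinAt
    have hci : ContinuousOn i (Icc 0 t) := fun x hx => ((hi x hx.1).continuousAt).continuousWithinAt
    have hcr : ContinuousOn r (Icc 0 t) := fun x hx => ((hr x hx.1).continuousAt).continuousWithinAt
    have hcn : ContinuousOn (fun x => s x + i x + r x) (Icc 0 t) := (hcs.add hci).add hcr
    have hnne : ∀ x ∈ Icc (0:ℝ) t, s x + i x + r x ≠ 0 := fun x hx => (hn x hx.1).ne'
    have hcg : ContinuousOn g (Icc 0 t) := by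
      intro x hx
      apply ContinuousWithinAt.add
      apply ContinuousWithinAt.add
      apply ContinuousWithinAt.add
      · exact ((hcs x hx).neg).max continuousWithinAt_const
      · exact ((hci x hx).neg).max continuousWithinAt_const
      · exact ((hcr x hx).neg).max continuousWithinAt_const
      · exact ((hcn x hx).sub continuousWithinAt_const).max continuousWithinAt_const
    -- bound on coefficients
    have hccd : ContinuousOn (fun x => |c x| + |d x|) (Icc 0 t) := by
      apply ContinuousOn.add
      · exact (((hbcont.continuousOn.mul hci).div hcn hnne).sub
          (continuousOn_const.mul (continuousOn_const.sub hcn))).abs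
      · exact (((hbcont.continuousOn.mul hcs).div hcn hnne).sub
          (continuousOn_const.add (continuousOn_const.mul hcn))).abs
    obtain ⟨C, hC⟩ := isCompact_Icc.exists_bound_of_continuousOn hccd
    set K : ℝ := |C| + γ + lam with hK
    have key := le_gronwallBound_of_liminf_deriv_right_le (f := g) (f' := φ)
      (δ := 0) (K := K) (ε := 0) (a := 0) (b := t) hcg ?_ ?_ ?_
    · have := key t ⟨ht, le_refl t⟩
      rwa [sub_zero, gronwallBound_ε0_δ0] at this
    · -- slope condition
      intro x hx ρ hρ
      have hx0 : (0:ℝ) ≤ x := hx.1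
      obtain ⟨L1, hL1, hT1⟩ := posPart_slope (u := fun τ => -(s τ)) ((hs x hx0).neg)
      obtain ⟨L2, hL2, hT2⟩ := posPart_slope (u := fun τ => -(i τ)) ((hi x hx0).neg)
      obtain ⟨L3, hL3, hT3⟩ := posPart_slope (u := fun τ => -(r τ)) ((hr x hx0).neg)
      obtain ⟨L4, hL4, hT4⟩ := posPart_slope (u := fun τ => s τ + i τ + r τ - 1)
        ((((hs x hx0).add (hi x hx0)).add (hr x hx0)).sub_const 1)
      have hT : Tendsto (fun z => (z - x)⁻¹ * (g z - g x)) (𝓝[>] x)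
          (𝓝 (L1 + L2 + L3 + L4)) := by
        have := ((hT1.add hT2).add hT3).add hT4
        refine Tendsto.congr (fun z => ?_) this
        simp only [hg]
        ring
      have hLρ : L1 + L2 + L3 + L4 < ρ := by
        have : L1 + L2 + L3 + L4 ≤ φ x := by
          simp only [hφ]; exact add_le_add (add_le_add (add_le_add hL1 hL2) hL3) hL4
        linarith
      exact ((tendsto_order.1 hT).2 ρ hLρ).frequently
    · -- initial value
      have e1 : max (-(s 0)) 0 = 0 := max_eq_right (by linarith)
      have e2 : max (-(i 0)) 0 = 0 := max_eq_right (by linarith)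
      have e3 : max (-(r 0)) 0 = 0 := max_eq_right (by linarith)
      have e4 : max (s 0 + i 0 + r 0 - 1) 0 = 0 := max_eq_right (by linarith)
      simp only [hg, e1, e2, e3, e4]; norm_num
    · -- the differential inequality  φ x ≤ K * g x
      intro x hx
      have hx0 : (0:ℝ) ≤ x := hx.1
      have hxI : x ∈ Icc (0:ℝ) t := ⟨hx.1, hx.2.le⟩
      have hnx : 0 < s x + i x + r x := hn x hx0
      have hbx : 0 ≤ b x := hbpos x hx0
      have hcd : |c x| + |d x| ≤ |C| := by
        have := hC x hxI
        rw [Real.norm_eq_abs] at this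
        have h0 : 0 ≤ |c x| + |d x| := by positivity
        calc |c x| + |d x| = |(|c x| + |d x|)| := by rw [abs_of_nonneg h0]
          _ ≤ C := this
          _ ≤ |C| := le_abs_self C
      have hsc : S' x = -(s x) * c x := by
        simp only [hS', hc]
        field_simp
        ring
      have hid : I' x = i x * d x := by
        simp only [hI', hd]
        field_simp
      have hnsum : S' x + I' x + R' x = lam * s x - lam * (s x + i x + r x) ^ 2 := by
        simp only [hS', hI', hR']
        ring
      -- component bounds
      have hb1 : (if -(s x) < 0 then 0 else max (-(S' x)) 0) ≤ |c x| * max (-(s x)) 0 := by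
        split_ifs with h
        · positivity
        · push_neg at h
          have hsx : s x ≤ 0 := by linarith
          have h1 : -(S' x) = s x * c x := by rw [hsc]; ring
          have h2 : max (s x * c x) 0 ≤ |s x * c x| :=
            max_le (le_abs_self _) (abs_nonneg _)
          have h3 : |s x * c x| = |c x| * (-(s x)) := by
            rw [abs_mul, abs_of_nonpos hsx]; ring
          have h4 : max (-(s x)) 0 = -(s x) := max_eq_left (by linarith)
          rw [h1, h4]; rw [h3] at h2; linarith
      have hb2 : (if -(i x) < 0 then 0 else max (-(I' x)) 0) ≤ |d x| * max (-(i x)) 0 := by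
        split_ifs with h
        · positivity
        · push_neg at h
          have hix : i x ≤ 0 := by linarith
          have h1 : -(I' x) = -(i x) * d x := by rw [hid]; ring
          have h2 : max (-(i x) * d x) 0 ≤ |(-(i x)) * d x| :=
            max_le (le_abs_self _) (abs_nonneg _)
          have h3 : |(-(i x)) * d x| = |d x| * (-(i x)) := by
            rw [abs_mul, abs_of_nonneg (by linarith : (0:ℝ) ≤ -(i x))]; ring
          have h4 : max (-(i x)) 0 = -(i x) := max_eq_left (by linarith)
          rw [h1, h4]; rw [h3] at h2; linarith
      have hb3 : (if -(r x) < 0 then 0 else max (-(R' x)) 0) ≤ γ * max (-(i x)) 0 := by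
        split_ifs with h
        · positivity
        · push_neg at h
          have hrx : r x ≤ 0 := by linarith
          have h1 : -(R' x) = lam * r x * (s x + i x + r x) - γ * i x := by
            simp only [hR']; ring
          have h2 : lam * r x * (s x + i x + r x) ≤ 0 := by
            have : r x * (s x + i x + r x) ≤ 0 := mul_nonpos_of_nonpos_of_nonneg hrx hnx.le
            nlinarith
          have h3 : -(i x) ≤ max (-(i x)) 0 := le_max_left _ _
          have h4 : (0:ℝ) ≤ γ * max (-(i x)) 0 := by positivity
          apply max_le _ h4
          rw [h1]
          nlinarith
      have hb4 : (if s x + i x + r x - 1 < 0 then 0 else max (S' x + I' x + R' x) 0)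
          ≤ lam * max (-(i x)) 0 + lam * max (-(r x)) 0 := by
        split_ifs with h
        · positivity
        · push_neg at h
          have hn1 : 1 ≤ s x + i x + r x := by linarith
          have h3 : -(i x) ≤ max (-(i x)) 0 := le_max_left _ _
          have h4 : -(r x) ≤ max (-(r x)) 0 := le_max_left _ _
          have h5 : (0:ℝ) ≤ lam * max (-(i x)) 0 + lam * max (-(r x)) 0 := by positivity
          apply max_le _ h5
          rw [hnsum]
          nlinarith [sq_nonneg (s x + i x + r x - 1)]
      -- combine
      have hcK : |c x| ≤ K := by
        have := abs_nonneg (d x); simp only [hK]; linarith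
      have hdK : |d x| + γ + lam ≤ K := by
        have := abs_nonneg (c x); simp only [hK]; linarith
      have hlK : lam ≤ K := by
        have := abs_nonneg C; simp only [hK]; linarith
      have m1 : (0:ℝ) ≤ max (-(s x)) 0 := le_max_right _ _
      have m2 : (0:ℝ) ≤ max (-(i x)) 0 := le_max_right _ _
      have m3 : (0:ℝ) ≤ max (-(r x)) 0 := le_max_right _ _
      have m4 : (0:ℝ) ≤ max (s x + i x + r x - 1) 0 := le_max_right _ _
      have hKnn : (0:ℝ) ≤ K := by have := abs_nonneg C; simp only [hK]; linarith
      simp only [hφ, hg]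
      have t1 : |c x| * max (-(s x)) 0 ≤ K * max (-(s x)) 0 :=
        mul_le_mul_of_nonneg_right hcK m1
      have t2 : (|d x| + γ + lam) * max (-(i x)) 0 ≤ K * max (-(i x)) 0 :=
        mul_le_mul_of_nonneg_right hdK m2
      have t3 : lam * max (-(r x)) 0 ≤ K * max (-(r x)) 0 :=
        mul_le_mul_of_nonneg_right hlK m3
      have t4 : (0:ℝ) ≤ K * max (s x + i x + r x - 1) 0 := mul_nonneg hKnn m4
      nlinarith [hb1, hb2, hb3, hb4]
  -- conclusion
  intro t ht
  have hgt := hgle t ht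
  have m1 : -(s t) ≤ max (-(s t)) 0 := le_max_left _ _
  have m2 : -(i t) ≤ max (-(i t)) 0 := le_max_left _ _
  have m3 : -(r t) ≤ max (-(r t)) 0 := le_max_left _ _
  have m4 : s t + i t + r t - 1 ≤ max (s t + i t + r t - 1) 0 := le_max_left _ _
  have n1 : (0:ℝ) ≤ max (-(s t)) 0 := le_max_right _ _
  have n2 : (0:ℝ) ≤ max (-(i t)) 0 := le_max_right _ _
  have n3 : (0:ℝ) ≤ max (-(r t)) 0 := le_max_right _ _
  have n4 : (0:ℝ) ≤ max (s t + i t + r t - 1) 0 := le_max_right _ _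
  simp only [hg] at hgt
  refine ⟨by linarith, by linarith, by linarith, by linarith, by linarith, by linarith⟩
end
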